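/- Let G be a finite simple graph, v a vertex of G, H a set of edges of G, and ρ > 0. Let S* be a v-star of maximum density with respect to H, and suppose ρ(S*, H) ≥ ρ/2. Let S be a v-star with ρ(S, H) ≥ ρ/4 such that S* is not contained in S. Then either the v-star S* \ S (which is nonempty and disjoint from S) satisfies ρ(S* \ S, H) ≥ ρ/4, or there exists an edge e ∈ S* \ S such that ρ(S ∪ {e}, H) ≥ ρ/4. -/

import Mathlib

namespace StarStep

variable {α : Type} [Fintype α] [DecidableEq α]

/-- `S` is a `v`-star in the simple graph `G`: a nonempty set of edges of `G` incident
to `v`. -/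
def IsStar (G : SimpleGraph α) (v : α) (S : Set (Sym2 α)) : Prop :=
  S.Nonempty ∧ ∀ e ∈ S, e ∈ G.edgeSet ∧ v ∈ e

/-- The `v`-star `S` 2-spans the edge `e = {u,w}` if `{v,u} ∈ S` and `{v,w} ∈ S`. -/
def Spans (v : α) (S : Set (Sym2 α)) (e : Sym2 α) : Prop :=
  ∃ u w : α, e = s(u, w) ∧ s(v, u) ∈ S ∧ s(v, w) ∈ S

/-- The density of the `v`-star `S` with respect to the edge set `H`: the number of edges
of `H` 2-spanned by `S` divided by `|S|`. -/
noncomputable def density (v : α) (H S : Set (Sym2 α)) : ℝ :=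
  ({e ∈ H | Spans v S e}.ncard : ℝ) / (S.ncard : ℝ)

private lemma ncard_biUnion_le' {β ι : Type} [Fintype β] (t : Finset ι)
    (f : ι → Set β) : (⋃ i ∈ t, f i).ncard ≤ ∑ i ∈ t, (f i).ncard := by
  classical
  induction t using Finset.induction_on with
  | empty => simp
  | insert a s ha ih =>
    rw [Finset.set_biUnion_insert, Finset.sum_insert ha]
    exact le_trans (Set.ncard_union_le _ _) (by omega)

private lemma not_spans_aux {v u w : α} {S : Set (Sym2 α)} (h : s(v, u) ∉ S) :
    ¬ Spans v S s(u, w) := by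
  rintro ⟨u', w', heq, h1, h2⟩
  rw [Sym2.eq_iff] at heq
  rcases heq with ⟨rfl, rfl⟩ | ⟨rfl, rfl⟩
  · exact h h1
  · exact h h2

/-- Let `S*` be a `v`-star of maximum density with respect to `H`, with
`ρ(S*,H) ≥ ρ/2`, and let `S` be a `v`-star with `ρ(S,H) ≥ ρ/4` such that `S* ⊄ S`.  Then
either the `v`-star `S* \ S` satisfies `ρ(S* \ S, H) ≥ ρ/4`, or there is an edge
`e ∈ S* \ S` with `ρ(S ∪ {e}, H) ≥ ρ/4`. -/
theorem statement17 (G : SimpleGraph α) (v : α) (H : Set (Sym2 α)) (hH : H ⊆ G.edgeSet)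
    (ρ : ℝ) (hρ : 0 < ρ) (Sstar S : Set (Sym2 α))
    (hSstar : IsStar G v Sstar)
    (hmax : ∀ S' : Set (Sym2 α), IsStar G v S' → density v H S' ≤ density v H Sstar)
    (hSstarρ : ρ / 2 ≤ density v H Sstar)
    (hS : IsStar G v S) (hSρ : ρ / 4 ≤ density v H S) (hnsub : ¬ Sstar ⊆ S) :
    (IsStar G v (Sstar \ S) ∧ ρ / 4 ≤ density v H (Sstar \ S)) ∨
    (∃ e ∈ Sstar \ S, ρ / 4 ≤ density v H (S ∪ {e})) := by
  classical
  by_contra hcon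
  push_neg at hcon
  obtain ⟨h1, h2⟩ := hcon
  -- `Sstar \ S` is a star
  have hdiff_ne : (Sstar \ S).Nonempty := by
    obtain ⟨x, hx, hxs⟩ := Set.not_subset.mp hnsub
    exact ⟨x, hx, hxs⟩
  have hdiff_star : IsStar G v (Sstar \ S) := ⟨hdiff_ne, fun e he => hSstar.2 e he.1⟩
  have hd1 : density v H (Sstar \ S) < ρ / 4 := by
    by_contra h
    exact absurd (h1 hdiff_star) (not_lt.mpr (le_of_not_gt h))
  -- cardinalities
  set k := (Sstar \ S).ncard with hk
  set m := (Sstar ∩ S).ncard with hm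
  have hkpos : 0 < k := (Set.ncard_pos (Set.toFinite _)).mpr hdiff_ne
  have hSpos : 0 < S.ncard := (Set.ncard_pos (Set.toFinite _)).mpr hS.1
  have hnstar : Sstar.ncard = k + m := by
    rw [hk, hm, ← Set.ncard_union_eq ?_ (Set.toFinite _) (Set.toFinite _),
      Set.diff_union_inter]
    exact Set.disjoint_left.mpr fun x hx hx2 => hx.2 hx2.2
  have hnstarpos : 0 < Sstar.ncard := (Set.ncard_pos (Set.toFinite _)).mpr hSstar.1
  -- sets of spanned edges
  set Nstar : Set (Sym2 α) := {e ∈ H | Spans v Sstar e} with hNstar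
  set A : Set (Sym2 α) := {e ∈ H | Spans v (Sstar \ S) e} with hA
  set B : Set (Sym2 α) := {e ∈ H | Spans v (Sstar ∩ S) e} with hB
  set Gt : Sym2 α → Set (Sym2 α) :=
    fun e' => {e ∈ H | Spans v (S ∪ {e'}) e} \ {e ∈ H | Spans v S e} with hGt
  set D : Finset (Sym2 α) := (Set.toFinite (Sstar \ S)).toFinset with hD
  have hDmem : ∀ e', e' ∈ D ↔ e' ∈ Sstar \ S := fun e' => Set.Finite.mem_toFinset _
  have hDcard : D.card = k := by
    rw [hk, Set.ncard_eq_toFinset_card _ (Set.toFinite (Sstar \ S))]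
  -- the covering inclusion
  have cover : Nstar ⊆ A ∪ B ∪ ⋃ e' ∈ D, Gt e' := by
    rintro e ⟨heH, u, w, rfl, hu, hw⟩
    by_cases hus : s(v, u) ∈ S <;> by_cases hws : s(v, w) ∈ S
    · exact Or.inl (Or.inr ⟨heH, u, w, rfl, ⟨hu, hus⟩, ⟨hw, hws⟩⟩)
    · -- s(v,u) ∈ S, s(v,w) ∉ S : mixed, use e' = s(v,w)
      refine Or.inr (Set.mem_biUnion ((hDmem _).mpr ⟨hw, hws⟩) ?_)
      refine ⟨⟨heH, u, w, rfl, Or.inl hus, Or.inr rfl⟩, ?_⟩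
      intro hmem
      have : Spans v S s(w, u) := by
        obtain ⟨_, hsp⟩ := hmem
        obtain ⟨u', w', heq, h3, h4⟩ := hsp
        exact ⟨u', w', by rw [Sym2.eq_swap]; exact heq, h3, h4⟩
      exact not_spans_aux hws this
    · -- s(v,u) ∉ S, s(v,w) ∈ S : mixed, use e' = s(v,u)
      refine Or.inr (Set.mem_biUnion ((hDmem _).mpr ⟨hu, hus⟩) ?_)
      refine ⟨⟨heH, u, w, rfl, Or.inr rfl, Or.inl hws⟩, ?_⟩
      intro hmem
      exact not_spans_aux hus hmem.2
    · exact Or.inl (Or.inl ⟨heH, u, w, rfl, ⟨hu, hus⟩, ⟨hw, hws⟩⟩)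
  -- counting
  have key : Nstar.ncard ≤ A.ncard + B.ncard + ∑ e' ∈ D, (Gt e').ncard := by
    calc Nstar.ncard ≤ (A ∪ B ∪ ⋃ e' ∈ D, Gt e').ncard :=
          Set.ncard_le_ncard cover (Set.toFinite _)
      _ ≤ (A ∪ B).ncard + (⋃ e' ∈ D, Gt e').ncard := Set.ncard_union_le _ _
      _ ≤ A.ncard + B.ncard + (⋃ e' ∈ D, Gt e').ncard := by
          have := Set.ncard_union_le A B; omega
      _ ≤ A.ncard + B.ncard + ∑ e' ∈ D, (Gt e').ncard := by
          have := ncard_biUnion_le' D Gt; omega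
  -- density facts as real inequalities
  set dstar : ℝ := density v H Sstar with hdstar
  have hdstar_pos : 0 ≤ dstar := le_trans (by linarith) hSstarρ
  have hNstar_eq : (Nstar.ncard : ℝ) = dstar * Sstar.ncard := by
    rw [hdstar, density]
    field_simp
    rfl
  have hAbound : (A.ncard : ℝ) < ρ / 4 * k := by
    have := hd1
    rw [density] at this
    have hk0 : (0 : ℝ) < (k : ℝ) := by exact_mod_cast hkpos
    calc (A.ncard : ℝ) = (A.ncard : ℝ) / k * k := by field_simp
      _ < ρ / 4 * k := by
          apply mul_lt_mul_of_pos_right _ hk0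
          exact this
  have hBbound : (B.ncard : ℝ) ≤ dstar * m := by
    rcases Set.eq_empty_or_nonempty (Sstar ∩ S) with hemp | hne
    · have : B = ∅ := by
        rw [hB, hemp]
        ext e
        simp only [Set.mem_setOf_eq, Set.mem_empty_iff_false, iff_false, not_and]
        rintro _ ⟨u, w, _, h3, _⟩
        exact h3
      rw [this, hm, hemp]
      simp
    · have hstar : IsStar G v (Sstar ∩ S) := ⟨hne, fun e he => hSstar.2 e he.1⟩
      have := hmax _ hstar
      rw [density] at this
      have hm0 : (0 : ℝ) < (m : ℝ) := by
        exact_mod_cast (Set.ncard_pos (Set.toFinite _)).mpr hne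
      calc (B.ncard : ℝ) = (B.ncard : ℝ) / m * m := by field_simp
        _ ≤ dstar * m := mul_le_mul_of_nonneg_right this (le_of_lt hm0)
  have hSbound : ρ / 4 * S.ncard ≤ ({e ∈ H | Spans v S e}.ncard : ℝ) := by
    have := hSρ
    rw [density] at this
    have hS0 : (0 : ℝ) < (S.ncard : ℝ) := by exact_mod_cast hSpos
    calc ρ / 4 * S.ncard ≤ ({e ∈ H | Spans v S e}.ncard : ℝ) / S.ncard * S.ncard :=
          mul_le_mul_of_nonneg_right this (le_of_lt hS0)
      _ = _ := by field_simp
  have hGbound : ∀ e' ∈ D, ((Gt e').ncard : ℝ) ≤ ρ / 4 := by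
    intro e' he'
    have he'mem : e' ∈ Sstar \ S := (hDmem e').mp he'
    have he'S : e' ∉ S := he'mem.2
    have hsub : {e ∈ H | Spans v S e} ⊆ {e ∈ H | Spans v (S ∪ {e'}) e} := by
      rintro e ⟨heH, u, w, heq, h3, h4⟩
      exact ⟨heH, u, w, heq, Or.inl h3, Or.inl h4⟩
    have hcard_eq : (Gt e').ncard + {e ∈ H | Spans v S e}.ncard
        = {e ∈ H | Spans v (S ∪ {e'}) e}.ncard :=
      Set.ncard_diff_add_ncard_of_subset hsub (Set.toFinite _)
    have hcardU : (S ∪ {e'}).ncard = S.ncard + 1 := by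
      rw [Set.union_singleton, Set.ncard_insert_of_notMem he'S (Set.toFinite _)]
    have hdu := h2 e' he'mem
    rw [density, hcardU] at hdu
    have hpos : (0 : ℝ) < ((S.ncard + 1 : ℕ) : ℝ) := by positivity
    have hUb : ({e ∈ H | Spans v (S ∪ {e'}) e}.ncard : ℝ) < ρ / 4 * (S.ncard + 1) := by
      calc ({e ∈ H | Spans v (S ∪ {e'}) e}.ncard : ℝ)
          = ({e ∈ H | Spans v (S ∪ {e'}) e}.ncard : ℝ) / ((S.ncard + 1 : ℕ) : ℝ)
            * ((S.ncard + 1 : ℕ) : ℝ) := by field_simp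
        _ < ρ / 4 * ((S.ncard + 1 : ℕ) : ℝ) := mul_lt_mul_of_pos_right hdu hpos
        _ = ρ / 4 * (S.ncard + 1) := by push_cast; ring
    have : ((Gt e').ncard : ℝ)
        = ({e ∈ H | Spans v (S ∪ {e'}) e}.ncard : ℝ) - ({e ∈ H | Spans v S e}.ncard : ℝ) := by
      have := hcard_eq
      push_cast [← this]
      ring
    rw [this]
    linarith
  have hsum : ((∑ e' ∈ D, (Gt e').ncard : ℕ) : ℝ) ≤ k * (ρ / 4) := by
    push_cast
    calc (∑ e' ∈ D, ((Gt e').ncard : ℝ)) ≤ ∑ _e' ∈ D, (ρ / 4) :=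
          Finset.sum_le_sum hGbound
      _ = D.card * (ρ / 4) := by rw [Finset.sum_const, nsmul_eq_mul]
      _ = k * (ρ / 4) := by rw [hDcard]
  -- put it all together
  have hkey : (Nstar.ncard : ℝ) ≤ (A.ncard : ℝ) + (B.ncard : ℝ)
      + ((∑ e' ∈ D, (Gt e').ncard : ℕ) : ℝ) := by exact_mod_cast key
  have hnstar' : (Sstar.ncard : ℝ) = (k : ℝ) + (m : ℝ) := by exact_mod_cast hnstar
  have hk0 : (0 : ℝ) < (k : ℝ) := by exact_mod_cast hkpos
  have hfinal : dstar * ((k : ℝ) + (m : ℝ)) < ρ / 4 * k + dstar * m + k * (ρ / 4) := by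
    rw [← hnstar', ← hNstar_eq]
    linarith
  have : dstar * k < ρ / 2 * k := by nlinarith
  have : dstar < ρ / 2 := lt_of_mul_lt_mul_right (by linarith [this]) (le_of_lt hk0)
  linarith [hSstarρ]

end StarStep
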